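/- Telescoping identity for the Poincaré polynomial evaluation: for invertible parameters t, t_0, t_n with all denominators nonzero, \prod_{1 \le i < j \le n} \frac{(1 - t^{j-i+1})(1 - t^{2n-j-i+1} t_n t_0)}{(1 - t^{j-i})(1 - t^{2n-j-i} t_n t_0)} \cdot \prod_{i=1}^n \frac{(1 - t_n t_0 t^{n-i})(1 + t_n t^{n-i})}{(1 - t_0 t_n t^{2(n-i)})} = \prod_{i=1}^n \frac{(1 - t^i)(1 + t_n t^{i-1})}{1 - t}. -/

import Mathlib

open Finset

private lemma telescope {K : Type*} [Field K] (f : ℕ → K) (m : ℕ)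
    (hf : ∀ k, k ≤ m → f k ≠ 0) :
    ∏ k ∈ range m, f (k + 1) / f k = f m / f 0 := by
  induction m with
  | zero => simp [div_self (hf 0 le_rfl)]
  | succ m ih =>
    rw [prod_range_succ, ih (fun k hk => hf k (hk.trans (Nat.le_succ m)))]
    have h0 := hf 0 (Nat.zero_le _)
    have hm := hf m (Nat.le_succ m)
    field_simp

private lemma pairprod {K : Type*} [Field K] (n : ℕ) (F : ℕ → ℕ → K) :
    ∏ p ∈ (Finset.univ : Finset (Fin n × Fin n)).filter (fun p => p.1 < p.2),
      F p.1.val p.2.val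
    = ∏ i ∈ range n, ∏ j ∈ Ico (i + 1) n, F i j := by
  rw [Finset.prod_filter, Fintype.prod_prod_type]
  have inner : ∀ a : ℕ, (∏ j : Fin n, if a < j.val then F a j.val else 1)
      = ∏ j ∈ Ico (a + 1) n, F a j := by
    intro a
    rw [Fin.prod_univ_eq_prod_range (fun j => if a < j then F a j else 1) n,
      ← Finset.prod_filter]
    congr 1
    ext j
    simp only [Finset.mem_filter, Finset.mem_Ico, Finset.mem_range]
    omega
  calc (∏ i : Fin n, ∏ j : Fin n, if (i, j).1 < (i, j).2 then F (i, j).1.val (i, j).2.val else 1)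
      = ∏ i : Fin n, (fun a => ∏ j ∈ Ico (a + 1) n, F a j) i.val := by
        refine Finset.prod_congr rfl fun i _ => ?_
        simp only [Fin.lt_def]
        exact inner i.val
    _ = ∏ i ∈ range n, ∏ j ∈ Ico (i + 1) n, F i j :=
        Fin.prod_univ_eq_prod_range (fun a => ∏ j ∈ Ico (a + 1) n, F a j) n

theorem poincare_telescoping {K : Type*} [Field K] (n : ℕ) (t t0 tn : K)
    (h1 : ∀ k : ℕ, 0 < k → (1 : K) - t ^ k ≠ 0)
    (h2 : ∀ k : ℕ, (1 : K) - tn * t0 * t ^ k ≠ 0) :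
    (∏ p ∈ (Finset.univ : Finset (Fin n × Fin n)).filter (fun p => p.1 < p.2),
        ((1 - t ^ (p.2.val - p.1.val + 1)) *
            (1 - t ^ (2 * n - 2 - p.1.val - p.2.val + 1) * tn * t0)) /
          ((1 - t ^ (p.2.val - p.1.val)) *
            (1 - t ^ (2 * n - 2 - p.1.val - p.2.val) * tn * t0)))
      * (∏ i : Fin n,
          ((1 - tn * t0 * t ^ (n - 1 - i.val)) * (1 + tn * t ^ (n - 1 - i.val))) /
            (1 - t0 * tn * t ^ (2 * (n - 1 - i.val))))
    = ∏ i : Fin n, ((1 - t ^ (i.val + 1)) * (1 + tn * t ^ i.val)) / (1 - t) := by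
  have h2' : ∀ k : ℕ, (1 : K) - t ^ k * tn * t0 ≠ 0 := by
    intro k h
    apply h2 k
    rw [← h]; ring
  have h2'' : ∀ k : ℕ, (1 : K) - t0 * tn * t ^ k ≠ 0 := by
    intro k h
    apply h2 k
    rw [← h]; ring
  have ht : (1 : K) - t ≠ 0 := by
    have := h1 1 one_pos; rwa [pow_one] at this
  -- Step 1: rewrite the pair product as an iterated product
  rw [pairprod n (fun a b =>
      ((1 - t ^ (b - a + 1)) * (1 - t ^ (2 * n - 2 - a - b + 1) * tn * t0)) /
        ((1 - t ^ (b - a)) * (1 - t ^ (2 * n - 2 - a - b) * tn * t0)))]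
  -- Step 2: telescope the inner product
  have key : ∀ i ∈ range n,
      (∏ j ∈ Ico (i + 1) n,
        ((1 - t ^ (j - i + 1)) * (1 - t ^ (2 * n - 2 - i - j + 1) * tn * t0)) /
          ((1 - t ^ (j - i)) * (1 - t ^ (2 * n - 2 - i - j) * tn * t0)))
      = ((1 - t ^ ((n - 1 - i) + 1)) * (1 - t ^ (2 * (n - 1 - i)) * tn * t0)) /
          ((1 - t) * (1 - t ^ (n - 1 - i) * tn * t0)) := by
    intro i hi
    rw [Finset.mem_range] at hi
    set m := n - 1 - i with hm
    rw [Finset.prod_Ico_eq_prod_range, show n - (i + 1) = m by omega]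
    have step : ∀ k ∈ range m,
        ((1 - t ^ (i + 1 + k - i + 1)) * (1 - t ^ (2 * n - 2 - i - (i + 1 + k) + 1) * tn * t0)) /
          ((1 - t ^ (i + 1 + k - i)) * (1 - t ^ (2 * n - 2 - i - (i + 1 + k)) * tn * t0))
        = ((1 - t ^ (k + 1 + 1)) / (1 - t ^ (k + 1))) *
          ((1 - t ^ (m + (m - 1 - k) + 1) * tn * t0) / (1 - t ^ (m + (m - 1 - k)) * tn * t0)) := by
      intro k hk
      rw [Finset.mem_range] at hk
      rw [show i + 1 + k - i + 1 = k + 1 + 1 by omega,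
        show i + 1 + k - i = k + 1 by omega,
        show 2 * n - 2 - i - (i + 1 + k) + 1 = m + (m - 1 - k) + 1 by omega,
        show 2 * n - 2 - i - (i + 1 + k) = m + (m - 1 - k) by omega,
        div_mul_div_comm]
    rw [Finset.prod_congr rfl step, Finset.prod_mul_distrib]
    have T1 : (∏ k ∈ range m, (1 - t ^ (k + 1 + 1)) / (1 - t ^ (k + 1)))
        = (1 - t ^ (m + 1)) / (1 - t) := by
      have := telescope (fun k => 1 - t ^ (k + 1)) m (fun k _ => h1 (k + 1) k.succ_pos)
      simpa using this
    have T2 : (∏ k ∈ range m, (1 - t ^ (m + (m - 1 - k) + 1) * tn * t0) /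
          (1 - t ^ (m + (m - 1 - k)) * tn * t0))
        = (1 - t ^ (2 * m) * tn * t0) / (1 - t ^ m * tn * t0) := by
      have hrefl := Finset.prod_range_reflect
        (fun k => (1 - t ^ (m + k + 1) * tn * t0) / (1 - t ^ (m + k) * tn * t0)) m
      have tel := telescope (fun k => 1 - t ^ (m + k) * tn * t0) m (fun k _ => h2' (m + k))
      simp only [← add_assoc] at tel
      rw [hrefl, tel, add_zero, show m + m = 2 * m by omega]
    rw [T1, T2, div_mul_div_comm]
  rw [Finset.prod_congr rfl key]
  -- Step 3: convert the remaining Fin products to range products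
  rw [Fin.prod_univ_eq_prod_range (fun a =>
      ((1 - tn * t0 * t ^ (n - 1 - a)) * (1 + tn * t ^ (n - 1 - a))) /
        (1 - t0 * tn * t ^ (2 * (n - 1 - a)))) n,
    Fin.prod_univ_eq_prod_range (fun a =>
      ((1 - t ^ (a + 1)) * (1 + tn * t ^ a)) / (1 - t)) n]
  -- Step 4: combine and reflect
  rw [← Finset.prod_mul_distrib,
    ← Finset.prod_range_reflect (fun a => ((1 - t ^ (a + 1)) * (1 + tn * t ^ a)) / (1 - t)) n]
  refine Finset.prod_congr rfl fun i hi => ?_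
  rw [Finset.mem_range] at hi
  set m := n - 1 - i with hm
  have d1 := h2' m
  have d2 := h2'' (2 * m)
  beta_reduce
  rw [div_mul_div_comm, div_eq_div_iff (mul_ne_zero (mul_ne_zero ht d1) d2) ht]
  ring
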